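/- Let n ≥ 2 and n_r be natural numbers with n_r ≤ n. Let (Z_t)_{t∈ℕ} be an integrable process adapted to a filtration (F_t) on a probability space, taking values in {0, 1, …, n − n_r}, such that for every t, almost surely: P(Z_{t+1} = Z_t + 1 | F_t) = (n − Z_t − n_r)·Z_t / (n(n−1)), P(Z_{t+1} = Z_t − 1 | F_t) = Z_t·(n − Z_t) / (n(n−1)), and P(Z_{t+1} = Z_t | F_t) = 1 − (n − Z_t − n_r)·Z_t/(n(n−1)) − Z_t·(n − Z_t)/(n(n−1)). Then for every t, E[Z_{t+1} | F_t] = Z_t·(1 − n_r/(n(n−1))) almost surely; consequently E[Z_{t+1} − Z_t] = −n_r·E[Z_t]/(n(n−1)) and (Z_t)_{t≥0} is a supermartingale. In particular, if n_r = 0 then (Z_t) is a martingale. -/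

import Mathlib

open MeasureTheory ProbabilityTheory

/-- Lemma 3.5: for the number `Z t` of agents holding opinion 1 in the asynchronous
`(n,k)` game with `n_r` rejectors and `n - n_r` random followers, given the game's
one-step conditional transition probabilities, one has
`E[Z (t+1) | ℱ t] = Z t (1 - n_r / (n (n-1)))` a.s., hence
`E[Z (t+1) - Z t] = - n_r E[Z t] / (n (n-1))`, `Z` is a supermartingale, and a
martingale when `n_r = 0`. -/
theorem stmt_5 {Ω : Type*} {m0 : MeasurableSpace Ω} (μ : Measure Ω) [IsProbabilityMeasure μ]
    (ℱ : Filtration ℕ m0) (n n_r : ℕ) (hn : 2 ≤ n) (hr : n_r ≤ n)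
    (Z : ℕ → Ω → ℝ) (hadp : Adapted ℱ Z) (hint : ∀ t, Integrable (Z t) μ)
    (hval : ∀ t ω, ∃ z : ℕ, z ≤ n - n_r ∧ Z t ω = z)
    (hup : ∀ t, μ[({ω | Z (t + 1) ω = Z t ω + 1}).indicator (fun _ => (1 : ℝ)) | ℱ t]
      =ᵐ[μ] fun ω => ((n : ℝ) - Z t ω - n_r) * Z t ω / (n * (n - 1)))
    (hdown : ∀ t, μ[({ω | Z (t + 1) ω = Z t ω - 1}).indicator (fun _ => (1 : ℝ)) | ℱ t]
      =ᵐ[μ] fun ω => Z t ω * ((n : ℝ) - Z t ω) / (n * (n - 1)))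
    (hstay : ∀ t, μ[({ω | Z (t + 1) ω = Z t ω}).indicator (fun _ => (1 : ℝ)) | ℱ t]
      =ᵐ[μ] fun ω => 1 - ((n : ℝ) - Z t ω - n_r) * Z t ω / (n * (n - 1))
        - Z t ω * ((n : ℝ) - Z t ω) / (n * (n - 1))) :
    (∀ t, μ[Z (t + 1) | ℱ t] =ᵐ[μ] fun ω => Z t ω * (1 - (n_r : ℝ) / (n * (n - 1))))
    ∧ (∀ t, ∫ ω, (Z (t + 1) ω - Z t ω) ∂μ
        = -(n_r : ℝ) * (∫ ω, Z t ω ∂μ) / (n * (n - 1)))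
    ∧ Supermartingale Z ℱ μ
    ∧ (n_r = 0 → Martingale Z ℱ μ) := by
  have hn0 : (0 : ℝ) < (n : ℝ) := by
    have : (2 : ℝ) ≤ (n : ℝ) := by exact_mod_cast hn
    linarith
  have hn1 : (0 : ℝ) < (n : ℝ) - 1 := by
    have : (2 : ℝ) ≤ (n : ℝ) := by exact_mod_cast hn
    linarith
  have hD : ((n : ℝ) * ((n : ℝ) - 1)) ≠ 0 := (mul_pos hn0 hn1).ne'
  have hZnn : ∀ t ω, 0 ≤ Z t ω := by
    intro t ω
    obtain ⟨z, _, hz⟩ := hval t ω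
    rw [hz]; positivity
  have hZm : ∀ s, Measurable (Z s) := fun s => (hadp s).mono (ℱ.le s) le_rfl
  -- the key conditional expectation computation
  have key : ∀ t, μ[Z (t + 1) | ℱ t]
      =ᵐ[μ] fun ω => Z t ω * (1 - (n_r : ℝ) / (n * (n - 1))) := by
    intro t
    set A := {ω | Z (t + 1) ω = Z t ω + 1} with hAdef
    set B := {ω | Z (t + 1) ω = Z t ω - 1} with hBdef
    set C := {ω | Z (t + 1) ω = Z t ω} with hCdef
    have hA : MeasurableSet A :=
      measurableSet_eq_fun (hZm (t + 1)) ((hZm t).add measurable_const)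
    have hB : MeasurableSet B :=
      measurableSet_eq_fun (hZm (t + 1)) ((hZm t).sub measurable_const)
    have hC : MeasurableSet C := measurableSet_eq_fun (hZm (t + 1)) (hZm t)
    have hIA : Integrable (A.indicator fun _ => (1 : ℝ)) μ :=
      (integrable_const (1 : ℝ)).indicator hA
    have hIB : Integrable (B.indicator fun _ => (1 : ℝ)) μ :=
      (integrable_const (1 : ℝ)).indicator hB
    have hIC : Integrable (C.indicator fun _ => (1 : ℝ)) μ :=
      (integrable_const (1 : ℝ)).indicator hC
    have hAB : ∀ ω, ω ∈ A → ω ∉ B := by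
      intro ω h1 h2
      simp only [hAdef, hBdef, Set.mem_setOf_eq] at h1 h2
      linarith
    have hAC : ∀ ω, ω ∈ A → ω ∉ C := by
      intro ω h1 h2
      simp only [hAdef, hCdef, Set.mem_setOf_eq] at h1 h2
      linarith
    have hBC : ∀ ω, ω ∈ B → ω ∉ C := by
      intro ω h1 h2
      simp only [hBdef, hCdef, Set.mem_setOf_eq] at h1 h2
      linarith
    -- the three events a.s. partition Ω
    have hsum_le : ∀ ω, A.indicator (fun _ => (1 : ℝ)) ω + B.indicator (fun _ => (1 : ℝ)) ω
        + C.indicator (fun _ => (1 : ℝ)) ω ≤ 1 := by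
      intro ω
      by_cases ha : ω ∈ A
      · have hb := hAB ω ha
        have hc := hAC ω ha
        simp [Set.indicator_of_mem, Set.indicator_of_notMem, ha, hb, hc]
      · by_cases hb : ω ∈ B
        · have hc := hBC ω hb
          simp [Set.indicator_of_mem, Set.indicator_of_notMem, ha, hb, hc]
        · by_cases hc : ω ∈ C <;>
            simp [Set.indicator_of_mem, Set.indicator_of_notMem, ha, hb, hc]
    have hcond_sum : μ[(A.indicator (fun _ => (1 : ℝ))
        + B.indicator (fun _ => (1 : ℝ)) + C.indicator (fun _ => (1 : ℝ))) | ℱ t]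
        =ᵐ[μ] fun _ => (1 : ℝ) := by
      have h1 := condExp_add (μ := μ) (m := ℱ t) (hIA.add hIB) hIC
      have h2 := condExp_add (μ := μ) (m := ℱ t) hIA hIB
      filter_upwards [h1, h2, hup t, hdown t, hstay t] with ω e1 e2 eu ed es
      rw [e1]
      simp only [Pi.add_apply]
      rw [e2]
      simp only [Pi.add_apply, hAdef, hBdef, hCdef, eu, ed, es]
      ring
    have hint_sum : Integrable (A.indicator (fun _ => (1 : ℝ))
        + B.indicator (fun _ => (1 : ℝ)) + C.indicator (fun _ => (1 : ℝ))) μ :=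
      (hIA.add hIB).add hIC
    have hint_int : ∫ ω, (A.indicator (fun _ => (1 : ℝ))
        + B.indicator (fun _ => (1 : ℝ)) + C.indicator (fun _ => (1 : ℝ))) ω ∂μ = 1 := by
      rw [← integral_condExp (ℱ.le t), integral_congr_ae hcond_sum]
      simp
    have hsum_one : ∀ᵐ ω ∂μ, A.indicator (fun _ => (1 : ℝ)) ω
        + B.indicator (fun _ => (1 : ℝ)) ω + C.indicator (fun _ => (1 : ℝ)) ω = 1 := by
      have hg_int : Integrable (fun ω => 1 - (A.indicator (fun _ => (1 : ℝ))
          + B.indicator (fun _ => (1 : ℝ)) + C.indicator (fun _ => (1 : ℝ))) ω) μ :=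
        (integrable_const (1 : ℝ)).sub hint_sum
      have hg0 : ∫ ω, (1 - (A.indicator (fun _ => (1 : ℝ))
          + B.indicator (fun _ => (1 : ℝ)) + C.indicator (fun _ => (1 : ℝ))) ω) ∂μ = 0 := by
        rw [integral_sub (integrable_const _) hint_sum, hint_int]
        simp
      have := (integral_eq_zero_iff_of_nonneg
        (fun ω => by simpa [Pi.add_apply, sub_nonneg] using hsum_le ω) hg_int).1 hg0
      filter_upwards [this] with ω hω
      have h' : (1 : ℝ) - (A.indicator (fun _ => (1 : ℝ)) ω + B.indicator (fun _ => (1 : ℝ)) ω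
          + C.indicator (fun _ => (1 : ℝ)) ω) = 0 := hω
      linarith
    -- a.s. representation of Z (t+1)
    have hZrep : Z (t + 1) =ᵐ[μ] fun ω => Z t ω + A.indicator (fun _ => (1 : ℝ)) ω
        - B.indicator (fun _ => (1 : ℝ)) ω := by
      filter_upwards [hsum_one] with ω h
      by_cases ha : ω ∈ A
      · have hb := hAB ω ha
        have haA : Z (t + 1) ω = Z t ω + 1 := ha
        simp [Set.indicator_of_mem, Set.indicator_of_notMem, ha, hb, haA]
      · by_cases hb : ω ∈ B
        · have hbB : Z (t + 1) ω = Z t ω - 1 := hb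
          simp [Set.indicator_of_mem, Set.indicator_of_notMem, ha, hb, hbB]
        · have hc : ω ∈ C := by
            by_contra hc
            simp [Set.indicator_of_notMem, ha, hb, hc] at h
          have hcC : Z (t + 1) ω = Z t ω := hc
          simp [Set.indicator_of_mem, Set.indicator_of_notMem, ha, hb, hcC]
    calc μ[Z (t + 1) | ℱ t]
        =ᵐ[μ] μ[(fun ω => Z t ω + A.indicator (fun _ => (1 : ℝ)) ω
            - B.indicator (fun _ => (1 : ℝ)) ω) | ℱ t] := condExp_congr_ae hZrep
      _ =ᵐ[μ] fun ω => Z t ω * (1 - (n_r : ℝ) / (n * (n - 1))) := by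
          have h1 : (fun ω => Z t ω + A.indicator (fun _ => (1 : ℝ)) ω
              - B.indicator (fun _ => (1 : ℝ)) ω)
              = (Z t + A.indicator (fun _ => (1 : ℝ))) - B.indicator (fun _ => (1 : ℝ)) := rfl
          rw [h1]
          have h2 := condExp_sub (μ := μ) (m := ℱ t) ((hint t).add hIA) hIB
          have h3 := condExp_add (μ := μ) (m := ℱ t) (hint t) hIA
          have h4 : μ[Z t | ℱ t] = Z t :=
            condExp_of_stronglyMeasurable (ℱ.le t) (hadp t).stronglyMeasurable (hint t)
          filter_upwards [h2, h3, hup t, hdown t] with ω e2 e3 eu ed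
          rw [e2]
          simp only [Pi.sub_apply, Pi.add_apply]
          rw [e3]
          simp only [Pi.add_apply, h4, hAdef, hBdef, eu, ed]
          field_simp
          ring
  refine ⟨key, ?_, ?_, ?_⟩
  · intro t
    rw [integral_sub (hint (t + 1)) (hint t)]
    have h1 : ∫ ω, Z (t + 1) ω ∂μ
        = ∫ ω, Z t ω * (1 - (n_r : ℝ) / (n * (n - 1))) ∂μ := by
      rw [← integral_condExp (ℱ.le t), integral_congr_ae (key t)]
    rw [h1, integral_mul_const]
    field_simp
    ring
  · refine supermartingale_nat hadp.stronglyAdapted hint fun t => ?_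
    filter_upwards [key t] with ω h
    rw [h]
    have hc : 0 ≤ (n_r : ℝ) / (n * (n - 1)) :=
      div_nonneg (Nat.cast_nonneg _) (mul_pos hn0 hn1).le
    nlinarith [hZnn t ω]
  · intro hnr
    refine martingale_nat hadp.stronglyAdapted hint fun t => ?_
    filter_upwards [key t] with ω h
    rw [h, hnr]
    simp
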